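/- Let S be a finite nonempty set, let w : S × S → [0,∞] be extended edge weights (w(a,b) = ∞ encodes absence of an edge), and let u ∈ S. Define S' = S \ {u} and w' : S' × S' → [0,∞] by w'(a,b) = min( w(a,b), w(a,u) + w(u,b) ). Then for all a, b ∈ S', the infimum over all finite sequences a = v₀, v₁, …, v_n = b with n ≥ 1 and all v_i ∈ S of Σ_{i<n} w(v_i, v_{i+1}) equals the infimum over all finite sequences a = v₀, v₁, …, v_n = b with n ≥ 1 and all v_i ∈ S' of Σ_{i<n} w'(v_i, v_{i+1}). That is, eliminating the state u while adding shortcut weights through u preserves minimum connection weights between all remaining states. -/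

import Mathlib

open ENNReal

lemma glue_walk {T : Type*} (f : T → T → ℝ≥0∞) (v1 v2 : ℕ → T) (m n : ℕ)
    (h : v1 m = v2 0) :
    ∃ v : ℕ → T, v 0 = v1 0 ∧ v (m + n) = v2 n ∧
      ∑ i ∈ Finset.range (m + n), f (v i) (v (i + 1)) =
        ∑ i ∈ Finset.range m, f (v1 i) (v1 (i + 1)) +
        ∑ i ∈ Finset.range n, f (v2 i) (v2 (i + 1)) := by
  refine ⟨fun k => if k < m then v1 k else v2 (k - m), ?_, ?_, ?_⟩
  · by_cases hm : 0 < m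
    · simp [hm]
    · have hm0 : m = 0 := by omega
      simp [hm, ← h, hm0]
  · have : ¬ (m + n < m) := by omega
    simp [this]
  · rw [Finset.sum_range_add]
    congr 1
    · apply Finset.sum_congr rfl
      intro i hi
      simp only [Finset.mem_range] at hi
      simp only
      have h2 : (if i + 1 < m then v1 (i+1) else v2 (i + 1 - m)) = v1 (i + 1) := by
        by_cases hc : i + 1 < m
        · simp [hc]
        · have : i + 1 = m := by omega
          simp [hc, this, ← h]
      rw [if_pos hi, h2]
    · apply Finset.sum_congr rfl
      intro i _
      have h1 : ¬ (m + i < m) := by omega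
      have h2 : ¬ (m + i + 1 < m) := by omega
      simp only [h1, h2, if_false]
      congr 2 <;> omega

lemma edge_expand {S : Type*} (w : S → S → ℝ≥0∞) (u a b : S) :
    ∃ m, 1 ≤ m ∧ ∃ v : ℕ → S, v 0 = a ∧ v m = b ∧
      ∑ i ∈ Finset.range m, w (v i) (v (i + 1)) ≤ min (w a b) (w a u + w u b) := by
  rcases min_cases (w a b) (w a u + w u b) with ⟨he, _⟩ | ⟨he, _⟩
  · refine ⟨1, le_refl _, fun k => if k = 0 then a else b, by simp, by simp, ?_⟩
    simp [he]
  · refine ⟨2, by norm_num, fun k => if k = 0 then a else if k = 1 then u else b,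
      by simp, by simp, ?_⟩
    rw [Finset.sum_range_succ, Finset.sum_range_one]
    simp [he]

lemma expand {S : Type*} (w : S → S → ℝ≥0∞) (u : S) :
    ∀ n, 1 ≤ n → ∀ v' : ℕ → {s : S // s ≠ u},
      ∃ m, 1 ≤ m ∧ ∃ v : ℕ → S, v 0 = (v' 0).val ∧ v m = (v' n).val ∧
        ∑ i ∈ Finset.range m, w (v i) (v (i + 1)) ≤
          ∑ i ∈ Finset.range n,
            min (w (v' i).val (v' (i + 1)).val)
              (w (v' i).val u + w u (v' (i + 1)).val) := by
  intro n hn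
  induction n, hn using Nat.le_induction with
  | base =>
    intro v'
    obtain ⟨m, hm, v, h0, h1, hle⟩ := edge_expand w u (v' 0).val (v' 1).val
    exact ⟨m, hm, v, h0, h1, by simpa using hle⟩
  | succ n hn ih =>
    intro v'
    obtain ⟨m1, hm1, v1, h10, h11, hle1⟩ := ih v'
    obtain ⟨m2, hm2, v2, h20, h21, hle2⟩ := edge_expand w u (v' n).val (v' (n+1)).val
    obtain ⟨v, hv0, hvmn, hsum⟩ := glue_walk w v1 v2 m1 m2 (h11.trans h20.symm)
    refine ⟨m1 + m2, by omega, v, hv0.trans h10, hvmn.trans h21, ?_⟩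
    rw [hsum, Finset.sum_range_succ]
    exact add_le_add hle1 hle2

noncomputable def fw {S : Type*} (w : S → S → ℝ≥0∞) (u : S) (x y : {s : S // s ≠ u}) : ℝ≥0∞ :=
  min (w x.val y.val) (w x.val u + w u y.val)

lemma compress {S : Type*} (w : S → S → ℝ≥0∞) (u : S) :
    ∀ n : ℕ, 1 ≤ n → ∀ v : ℕ → S, v 0 ≠ u → v n ≠ u →
      ∃ m, 1 ≤ m ∧ ∃ v' : ℕ → {s : S // s ≠ u}, (v' 0).val = v 0 ∧ (v' m).val = v n ∧
        ∑ i ∈ Finset.range m, fw w u (v' i) (v' (i + 1)) ≤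
          ∑ i ∈ Finset.range n, w (v i) (v (i + 1)) := by
  intro n
  induction n using Nat.strong_induction_on with
  | _ n ih =>
  intro hn v hv0 hvn
  classical
  by_cases hall : ∀ i ≤ n, v i ≠ u
  · refine ⟨n, hn, fun k => ⟨v (min k n), hall _ (min_le_right _ _)⟩, by simp, by simp, ?_⟩
    apply Finset.sum_le_sum
    intro i hi
    simp only [Finset.mem_range] at hi
    have h1 : min i n = i := by omega
    have h2 : min (i + 1) n = i + 1 := by omega
    simp only [h1, h2, fw]
    exact min_le_left _ _
  · push_neg at hall
    obtain ⟨c, hc1, hc2⟩ := hall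
    have hP : ∃ i, i ≤ n ∧ v i = u := ⟨c, hc1, hc2⟩
    set i0 := Nat.find hP with hi0def
    obtain ⟨hi0le, hi0u⟩ : i0 ≤ n ∧ v i0 = u := Nat.find_spec hP
    have hpre : ∀ k < i0, v k ≠ u := by
      intro k hk hu
      exact Nat.find_min hP hk ⟨by omega, hu⟩
    have hi0pos : 1 ≤ i0 := by
      rcases Nat.eq_zero_or_pos i0 with h | h
      · exact absurd (h ▸ hi0u) hv0
      · exact h
    have hi0lt : i0 < n := by
      rcases Nat.lt_or_ge i0 n with h | h
      · exact h
      · have : i0 = n := by omega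
        exact absurd (this ▸ hi0u) hvn
    have hQ : ∃ j, i0 < j ∧ v j ≠ u := ⟨n, hi0lt, hvn⟩
    set j := Nat.find hQ with hjdef
    obtain ⟨hij, hju⟩ : i0 < j ∧ v j ≠ u := Nat.find_spec hQ
    have hjle : j ≤ n := Nat.find_le ⟨hi0lt, hvn⟩
    have hmid : ∀ k, i0 ≤ k → k < j → v k = u := by
      intro k h1 h2
      rcases Nat.eq_or_lt_of_le h1 with h | h
      · exact h ▸ hi0u
      · have := Nat.find_min hQ h2
        push_neg at this
        exact this h
    clear_value i0 j
    obtain ⟨i1, rfl⟩ : ∃ i1, i0 = i1 + 1 := ⟨i0 - 1, by omega⟩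
    -- key middle bound
    have hkey : w (v i1) u + w u (v j) ≤ ∑ k ∈ Finset.Ico i1 j, w (v k) (v (k + 1)) := by
      have hne : i1 ≠ j - 1 := by omega
      calc w (v i1) u + w u (v j)
          = ∑ k ∈ ({i1, j - 1} : Finset ℕ), w (v k) (v (k + 1)) := by
            rw [Finset.sum_pair hne]
            have e1 : v (i1 + 1) = u := hi0u
            have e2 : v (j - 1) = u := hmid (j - 1) (by omega) (by omega)
            have e3 : j - 1 + 1 = j := by omega
            rw [e1, e2, e3]
        _ ≤ ∑ k ∈ Finset.Ico i1 j, w (v k) (v (k + 1)) := by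
            apply Finset.sum_le_sum_of_subset
            intro k hk
            simp only [Finset.mem_insert, Finset.mem_singleton] at hk
            simp only [Finset.mem_Ico]
            omega
    -- prefix walk
    set p : ℕ → {s : S // s ≠ u} :=
      fun k => if h : k < i1 + 1 then ⟨v k, hpre k h⟩ else ⟨v j, hju⟩ with hpdef
    have hp0 : (p 0).val = v 0 := by simp [hpdef]
    have hplast : p (i1 + 1) = ⟨v j, hju⟩ := by simp [hpdef]
    have hpref : ∑ k ∈ Finset.range (i1 + 1), fw w u (p k) (p (k + 1)) ≤
        ∑ k ∈ Finset.range j, w (v k) (v (k + 1)) := by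
      have step1 : ∑ k ∈ Finset.range (i1 + 1), fw w u (p k) (p (k + 1)) ≤
          ∑ k ∈ Finset.range i1, w (v k) (v (k + 1)) + (w (v i1) u + w u (v j)) := by
        rw [Finset.sum_range_succ]
        apply add_le_add
        · apply Finset.sum_le_sum
          intro k hk
          simp only [Finset.mem_range] at hk
          have e1 : p k = ⟨v k, hpre k (by omega)⟩ := by simp [hpdef, show k < i1 + 1 by omega, show k ≤ i1 by omega]
          have e2 : p (k + 1) = ⟨v (k + 1), hpre _ (by omega)⟩ := by
            simp [hpdef, show k + 1 < i1 + 1 by omega, hk]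
          rw [e1, e2]
          exact min_le_left _ _
        · have e1 : p i1 = ⟨v i1, hpre i1 (by omega)⟩ := by simp [hpdef]
          rw [e1, hplast]
          exact min_le_right _ _
      refine step1.trans ?_
      calc ∑ k ∈ Finset.range i1, w (v k) (v (k + 1)) + (w (v i1) u + w u (v j))
          ≤ ∑ k ∈ Finset.range i1, w (v k) (v (k + 1)) +
              ∑ k ∈ Finset.Ico i1 j, w (v k) (v (k + 1)) := add_le_add le_rfl hkey
        _ = ∑ k ∈ Finset.range j, w (v k) (v (k + 1)) := by
            simp only [Finset.range_eq_Ico]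
            exact Finset.sum_Ico_consecutive _ (Nat.zero_le _) (by omega)
    rcases Nat.eq_or_lt_of_le hjle with hjeq | hjlt
    · -- j = n : prefix only
      refine ⟨i1 + 1, by omega, p, hp0, ?_, ?_⟩
      · rw [hplast]; exact congrArg v hjeq
      · refine hpref.trans ?_
        rw [hjeq]
    · -- j < n : recurse on suffix
      obtain ⟨m2, hm2, t, ht0, htm, hts⟩ := ih (n - j) (by omega) (by omega) (fun k => v (j + k))
        (by simpa using hju) (by show v (j + (n - j)) ≠ u; rw [show j + (n - j) = n by omega]; exact hvn)
      have hshift : ∑ k ∈ Finset.range (n - j), w (v (j + k)) (v (j + k + 1)) =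
          ∑ k ∈ Finset.Ico j n, w (v k) (v (k + 1)) := by
        rw [Finset.sum_Ico_eq_sum_range]
      obtain ⟨v', hv'0, hv'm, hsum⟩ := glue_walk (fw w u) p t (i1 + 1) m2
        (by rw [hplast]; exact (Subtype.ext (by simpa using ht0.symm)))
      refine ⟨i1 + 1 + m2, by omega, v', ?_, ?_, ?_⟩
      · rw [hv'0, hp0]
      · rw [hv'm, htm, show j + (n - j) = n by omega]
      · rw [hsum]
        calc ∑ i ∈ Finset.range (i1 + 1), fw w u (p i) (p (i + 1)) +
              ∑ i ∈ Finset.range m2, fw w u (t i) (t (i + 1))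
            ≤ ∑ k ∈ Finset.range j, w (v k) (v (k + 1)) +
              ∑ k ∈ Finset.Ico j n, w (v k) (v (k + 1)) := by
              apply add_le_add hpref
              rw [← hshift]
              exact hts
          _ = ∑ i ∈ Finset.range n, w (v i) (v (i + 1)) := by
              simp only [Finset.range_eq_Ico]
              exact Finset.sum_Ico_consecutive _ (Nat.zero_le _) (by omega)

/-- Eliminating a state `u` while adding shortcut weights through
`u` preserves the minimum connection weight (infimum of walk weights, over
walks of length at least 1) between all remaining states. -/
theorem stmt_10 {S : Type*} [Fintype S] [Nonempty S] (w : S → S → ℝ≥0∞) (u : S) :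
    ∀ a b : {s : S // s ≠ u},
      sInf {x : ℝ≥0∞ | ∃ n : ℕ, 1 ≤ n ∧ ∃ v : ℕ → S, v 0 = a.val ∧ v n = b.val ∧
          x = ∑ i ∈ Finset.range n, w (v i) (v (i + 1))} =
      sInf {x : ℝ≥0∞ | ∃ n : ℕ, 1 ≤ n ∧ ∃ v : ℕ → {s : S // s ≠ u}, v 0 = a ∧ v n = b ∧
          x = ∑ i ∈ Finset.range n,
            min (w (v i).val (v (i + 1)).val)
              (w (v i).val u + w u (v (i + 1)).val)} := by
  intro a b
  apply le_antisymm
  · apply le_sInf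
    rintro x ⟨n, hn, v', h0, hn', rfl⟩
    obtain ⟨m, hm, v, hv0, hvm, hle⟩ := expand w u n hn v'
    refine le_trans (sInf_le ⟨m, hm, v, ?_, ?_, rfl⟩) hle
    · rw [hv0, h0]
    · rw [hvm, hn']
  · apply le_sInf
    rintro x ⟨n, hn, v, h0, hn', rfl⟩
    obtain ⟨m, hm, v', h0', hm', hle⟩ := compress w u n hn v
      (by rw [h0]; exact a.2) (by rw [hn']; exact b.2)
    refine le_trans (sInf_le ⟨m, hm, v', ?_, ?_, ?_⟩) hle
    · exact Subtype.ext (h0'.trans h0)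
    · exact Subtype.ext (hm'.trans hn')
    · simp only [fw]
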